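/- Let (p_n)_{n≥1} be a guided sequence of polynomials over ℂ: deg p_1 ≥ 1, deg p_n ≥ 2 for n ≥ 2, and with α := limsup_{n→∞} 1/(deg p_n) there exist r > 0 and h : ℂ → ℝ satisfying h(z) − α·log|z| → ∞ as |z| → ∞ such that (i) every zero of every p_n lies in the closed disk of radius r centered at 0, and (ii) there exists N > 1 such that for all n ≥ N and all ζ with |ζ| > r, (1/deg p_n)·log⁺|p_n(ζ)| > h(ζ). Then the non-autonomous filled Julia set K[(p_n)] := {z ∈ ℂ : the sequence ((p_n ∘ ⋯ ∘ p_1)(z))_{n≥1} is bounded} is non-empty and compact. -/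

import Mathlib

open Filter Polynomial

/-- Evaluation of the composition `p_n ∘ ⋯ ∘ p_1` at a point (`p_1` applied first);
for `n = 0` it is the identity. -/
noncomputable def compEval (p : ℕ → Polynomial ℂ) : ℕ → ℂ → ℂ
  | 0, z => z
  | n + 1, z => (p (n + 1)).eval (compEval p n z)

lemma ms_pow_le_prod (s : Multiset ℝ) (b : ℝ) (hb : 0 ≤ b) (h : ∀ x ∈ s, b ≤ x) :
    b ^ Multiset.card s ≤ s.prod := by
  induction s using Multiset.induction with
  | empty => simp
  | cons a s ih =>
    simp only [Multiset.prod_cons, Multiset.card_cons, pow_succ]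
    have ha := h a (Multiset.mem_cons_self a s)
    have hs := ih (fun x hx => h x (Multiset.mem_cons_of_mem hx))
    calc b ^ Multiset.card s * b ≤ s.prod * a :=
          mul_le_mul hs ha hb (Multiset.prod_nonneg fun x hx => hb.trans (h x (Multiset.mem_cons_of_mem hx)))
      _ = a * s.prod := mul_comm _ _

lemma ms_prod_le_pow (s : Multiset ℝ) (B : ℝ) (hB : 0 ≤ B) (h0 : ∀ x ∈ s, 0 ≤ x)
    (h : ∀ x ∈ s, x ≤ B) : s.prod ≤ B ^ Multiset.card s := by
  induction s using Multiset.induction with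
  | empty => simp
  | cons a s ih =>
    simp only [Multiset.prod_cons, Multiset.card_cons, pow_succ]
    have ha := h a (Multiset.mem_cons_self a s)
    have hs := ih (fun x hx => h0 x (Multiset.mem_cons_of_mem hx))
      (fun x hx => h x (Multiset.mem_cons_of_mem hx))
    calc a * s.prod ≤ B * B ^ Multiset.card s :=
          mul_le_mul ha hs (Multiset.prod_nonneg fun x hx => h0 x (Multiset.mem_cons_of_mem hx)) hB
      _ = B ^ Multiset.card s * B := mul_comm _ _

lemma eval_abs_factored (q : Polynomial ℂ) (w : ℂ) :
    ‖q.eval w‖ =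
      ‖q.leadingCoeff‖ * (Multiset.map (fun a => ‖w - a‖) q.roots).prod := by
  have hm : ∀ s : Multiset ℂ, ‖s.prod‖ = (s.map (‖·‖)).prod :=
    fun s => map_multiset_prod (normHom : ℂ →*₀ ℝ) s
  conv_lhs => rw [(IsAlgClosed.splits q).eq_prod_roots]
  rw [Polynomial.eval_mul, Polynomial.eval_C, norm_mul, Polynomial.eval_multiset_prod,
    hm, Multiset.map_map, Multiset.map_map]
  congr 2
  ext a
  simp

lemma eval_lower (q : Polynomial ℂ) (r : ℝ)
    (hroots : ∀ z : ℂ, q.eval z = 0 → ‖z‖ ≤ r) (w : ℂ) (hw : r ≤ ‖w‖) :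
    ‖q.leadingCoeff‖ * (‖w‖ - r) ^ q.natDegree ≤ ‖q.eval w‖ := by
  rcases eq_or_ne q 0 with rfl | hq
  · simp
  rw [eval_abs_factored]
  have hcard : Multiset.card q.roots = q.natDegree :=
    Polynomial.splits_iff_card_roots.mp (IsAlgClosed.splits q)
  apply mul_le_mul_of_nonneg_left _ (norm_nonneg _)
  rw [← hcard]
  have := ms_pow_le_prod (Multiset.map (fun a => ‖w - a‖) q.roots)
    (‖w‖ - r) (by linarith) ?_
  · simpa using this
  · intro x hx
    obtain ⟨a, ha, rfl⟩ := Multiset.mem_map.mp hx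
    have har : ‖a‖ ≤ r := hroots a (Polynomial.mem_roots'.mp ha).2
    have : ‖w‖ - ‖a‖ ≤ ‖w - a‖ := by
      simpa using norm_sub_norm_le w a
    linarith

lemma eval_upper (q : Polynomial ℂ) (r : ℝ) (hr : 0 ≤ r)
    (hroots : ∀ z : ℂ, q.eval z = 0 → ‖z‖ ≤ r) (w : ℂ) :
    ‖q.eval w‖ ≤ ‖q.leadingCoeff‖ * (‖w‖ + r) ^ q.natDegree := by
  rcases eq_or_ne q 0 with rfl | hq
  · simp
  rw [eval_abs_factored]
  have hcard : Multiset.card q.roots = q.natDegree :=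
    Polynomial.splits_iff_card_roots.mp (IsAlgClosed.splits q)
  apply mul_le_mul_of_nonneg_left _ (norm_nonneg _)
  rw [← hcard]
  have := ms_prod_le_pow (Multiset.map (fun a => ‖w - a‖) q.roots)
    (‖w‖ + r) (by positivity) ?_ ?_
  · simpa using this
  · intro x hx
    obtain ⟨a, ha, rfl⟩ := Multiset.mem_map.mp hx
    exact norm_nonneg _
  · intro x hx
    obtain ⟨a, ha, rfl⟩ := Multiset.mem_map.mp hx
    have har : ‖a‖ ≤ r := hroots a (Polynomial.mem_roots'.mp ha).2
    have : ‖w - a‖ ≤ ‖w‖ + ‖a‖ := by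
      simpa using norm_sub_le w a
    linarith

noncomputable def compPoly (p : ℕ → Polynomial ℂ) : ℕ → Polynomial ℂ
  | 0 => Polynomial.X
  | n + 1 => (p (n + 1)).comp (compPoly p n)

lemma compPoly_eval (p : ℕ → Polynomial ℂ) (n : ℕ) (z : ℂ) :
    (compPoly p n).eval z = compEval p n z := by
  induction n with
  | zero => simp [compPoly, compEval]
  | succ n ih => simp [compPoly, compEval, Polynomial.eval_comp, ih]

lemma compPoly_natDegree_pos (p : ℕ → Polynomial ℂ)
    (hdeg1 : 1 ≤ (p 1).natDegree) (hdeg : ∀ n ≥ 2, 2 ≤ (p n).natDegree) :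
    ∀ n, 1 ≤ n → 0 < (compPoly p n).natDegree := by
  intro n hn
  induction n with
  | zero => omega
  | succ n ih =>
    rcases Nat.eq_zero_or_pos n with rfl | hn'
    · simpa [compPoly, Polynomial.natDegree_comp] using (show 0 < (p 1).natDegree from hdeg1)
    · have h1 : 2 ≤ (p (n + 1)).natDegree := hdeg (n + 1) (by omega)
      have h2 := ih hn'
      rw [compPoly, Polynomial.natDegree_comp]
      positivity

lemma compEval_continuous (p : ℕ → Polynomial ℂ) (n : ℕ) : Continuous (compEval p n) := by
  induction n with
  | zero => exact continuous_id
  | succ n ih => exact (p (n + 1)).continuous.comp ih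

lemma bounded_preimage (q : Polynomial ℂ) (hq : 0 < q.natDegree) (R : ℝ) :
    ∃ B : ℝ, ∀ z : ℂ, B ≤ ‖z‖ → R < ‖q.eval z‖ := by
  have hdeg : 0 < q.degree := Polynomial.natDegree_pos_iff_degree_pos.mp hq
  have ht : Tendsto (fun x : ℂ => ‖q.eval x‖) (Filter.comap norm Filter.atTop) Filter.atTop :=
    Polynomial.tendsto_norm_atTop q hdeg tendsto_comap
  have hev : ∀ᶠ x : ℂ in Filter.comap norm Filter.atTop, R < ‖q.eval x‖ :=
    ht.eventually (eventually_gt_atTop R)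
  rw [Filter.eventually_comap] at hev
  obtain ⟨B, hB⟩ := Filter.eventually_atTop.mp hev
  exact ⟨B, fun z hz => by
    simpa using hB ‖z‖ (by simpa using hz) z rfl⟩


lemma quad_growth (c r t : ℝ) (hr : 0 < r) (h2rt : 2 * r < t)
    (hint1 : 0 ≤ c ^ 2 * ((t - 2 * r) * (3 * t - 2 * r))) (hint2 : 8 * t < c ^ 2 * t * t) :
    2 * t ≤ (c * (t - r)) ^ 2 := by nlinarith [hint1, hint2]

lemma one_le_of_sq (b t : ℝ) (hb0 : 0 ≤ b) (ht : 1 ≤ t) (hb2 : 2 * t ≤ b ^ 2) : 1 ≤ b := by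
  nlinarith

set_option maxHeartbeats 1000000 in
theorem guided_julia_nonempty_compact
    (p : ℕ → Polynomial ℂ)
    (hdeg1 : 1 ≤ (p 1).natDegree)
    (hdeg : ∀ n ≥ 2, 2 ≤ (p n).natDegree)
    (α : ℝ)
    (hα : α = Filter.limsup (fun n => (1 : ℝ) / ((p n).natDegree : ℝ)) Filter.atTop)
    (r : ℝ) (hr : 0 < r)
    (h : ℂ → ℝ)
    (hh : Filter.Tendsto (fun z : ℂ => h z - α * Real.log (‖z‖))
      (Filter.comap (fun z : ℂ => ‖z‖) Filter.atTop) Filter.atTop)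
    (hzeros : ∀ n ≥ 1, ∀ z : ℂ, (p n).eval z = 0 → ‖z‖ ≤ r)
    (hguided : ∃ N : ℕ, 1 < N ∧ ∀ n ≥ N, ∀ ζ : ℂ, r < ‖ζ‖ →
      h ζ < (1 / ((p n).natDegree : ℝ)) * max 0 (Real.log (‖(p n).eval ζ‖))) :
    ({z : ℂ | ∃ M : ℝ, ∀ n ≥ 1, ‖compEval p n z‖ ≤ M}).Nonempty ∧
    IsCompact {z : ℂ | ∃ M : ℝ, ∀ n ≥ 1, ‖compEval p n z‖ ≤ M} := by
  obtain ⟨N, hN1, hg⟩ := hguided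
  -- α is nonnegative
  have hα0 : 0 ≤ α := by
    rw [hα]
    apply Filter.le_limsup_of_frequently_le
    · exact Filter.Eventually.frequently (Filter.Eventually.of_forall fun n => by positivity)
    · refine Filter.isBoundedUnder_of ⟨1, fun n => ?_⟩
      rcases Nat.eq_zero_or_pos (p n).natDegree with h0 | h0
      · simp [h0]
      · have h0' : (1:ℝ) ≤ ((p n).natDegree : ℝ) := by exact_mod_cast h0
        rw [div_le_one (by linarith)]
        exact h0'
  -- threshold from hh
  obtain ⟨R0, hR0⟩ : ∃ R0 : ℝ, ∀ z : ℂ, R0 ≤ ‖z‖ →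
      1 ≤ h z - α * Real.log (‖z‖) := by
    have hev := hh.eventually (Filter.eventually_ge_atTop 1)
    rw [Filter.eventually_comap] at hev
    obtain ⟨B, hB⟩ := Filter.eventually_atTop.mp hev
    exact ⟨B, fun z hz => hB ‖z‖ hz z rfl⟩
  set S : ℝ := max (max R0 (r + 1)) 1 with hSdef
  have hS1 : 1 ≤ S := le_max_right _ 1
  have hSr : r < S := lt_of_lt_of_le (lt_add_one r) ((le_max_right R0 (r + 1)).trans (le_max_left _ 1))
  have hSR0 : R0 ≤ S := (le_max_left R0 (r + 1)).trans (le_max_left _ 1)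
  set ξ : ℂ := (S : ℂ) with hξdef
  have habsξ : ‖ξ‖ = S := by
    rw [hξdef, Complex.norm_real, Real.norm_eq_abs]
    exact abs_of_nonneg (by linarith)
  have hhξ : 1 ≤ h ξ := by
    have h1 := hR0 ξ (by rw [habsξ]; exact hSR0)
    rw [habsξ] at h1
    have hlogS : 0 ≤ Real.log S := Real.log_nonneg hS1
    linarith [mul_nonneg hα0 hlogS]
  set c : ℝ := Real.exp 1 / (S + r) with hcdef
  have hSrpos : (0:ℝ) < S + r := by linarith
  have hc : 0 < c := div_pos (Real.exp_pos 1) hSrpos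
  set R : ℝ := max (max S (2 * r)) (8 / c ^ 2) with hRdef
  have hSR : S ≤ R := (le_max_left S (2 * r)).trans (le_max_left _ _)
  have h2rR : 2 * r ≤ R := (le_max_right S (2 * r)).trans (le_max_left _ _)
  have hc2R : 8 / c ^ 2 ≤ R := le_max_right _ _
  have hR1 : 1 ≤ R := hS1.trans hSR
  have hRr : r < R := hSr.trans_le hSR
  have hRpos : 0 < R := by linarith
  -- escape lemma
  have escape : ∀ n, N ≤ n → ∀ ζ : ℂ, R < ‖ζ‖ →
      2 * ‖ζ‖ ≤ ‖(p n).eval ζ‖ := by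
    intro n hn ζ hζ
    have hd2 : 2 ≤ (p n).natDegree := hdeg n (by omega)
    set d := (p n).natDegree with hdd
    have hd0 : (0:ℝ) < (d:ℝ) := by exact_mod_cast (by omega : 0 < d)
    have hd2' : (2:ℝ) ≤ (d:ℝ) := by exact_mod_cast hd2
    have hroots := hzeros n (by omega)
    have hgξ := hg n hn ξ (by rw [habsξ]; exact hSr)
    set L := Real.log (‖(p n).eval ξ‖) with hLdef
    have hdh : (d:ℝ) * h ξ < max 0 L := by
      have h2 := mul_lt_mul_of_pos_left hgξ hd0
      rw [← mul_assoc, mul_one_div, div_self (ne_of_gt hd0), one_mul] at h2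
      exact h2
    have hdhξ : (d:ℝ) ≤ (d:ℝ) * h ξ := by
      have := mul_le_mul_of_nonneg_left hhξ hd0.le
      linarith
    have hLpos : 0 < L := by
      by_contra hneg
      push_neg at hneg
      rw [max_eq_left hneg] at hdh
      linarith
    rw [max_eq_right hLpos.le] at hdh
    have habs_pos : 0 < ‖(p n).eval ξ‖ := by
      by_contra hneg
      push_neg at hneg
      have h0 : ‖(p n).eval ξ‖ = 0 :=
        le_antisymm hneg (norm_nonneg _)
      rw [hLdef, h0, Real.log_zero] at hLpos
      exact lt_irrefl 0 hLpos
    have hexp : Real.exp 1 ^ d ≤ ‖(p n).eval ξ‖ := by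
      have h1 : Real.exp ((d:ℝ) * h ξ) < ‖(p n).eval ξ‖ :=
        (Real.lt_log_iff_exp_lt habs_pos).mp hdh
      have h2 : Real.exp (d:ℝ) ≤ Real.exp ((d:ℝ) * h ξ) := Real.exp_le_exp.mpr hdhξ
      have h3 : Real.exp 1 ^ d = Real.exp (d:ℝ) := by rw [← Real.exp_nat_mul, mul_one]
      linarith
    have hup := eval_upper (p n) r hr.le hroots ξ
    rw [habsξ] at hup
    have hlead : c ^ d ≤ ‖(p n).leadingCoeff‖ := by
      rw [hcdef, div_pow, div_le_iff₀ (by positivity)]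
      calc Real.exp 1 ^ d ≤ ‖(p n).eval ξ‖ := hexp
        _ ≤ ‖(p n).leadingCoeff‖ * (S + r) ^ d := hup
    have hlow := eval_lower (p n) r hroots ζ (by linarith)
    set t := ‖ζ‖ with htdef
    set b := c * (t - r) with hbdef
    have h2rt : 2 * r < t := lt_of_le_of_lt h2rR hζ
    have h8 : 8 < c ^ 2 * t := by
      have h1 : 8 / c ^ 2 < t := lt_of_le_of_lt hc2R hζ
      rw [div_lt_iff₀ (by positivity)] at h1
      linarith
    have hb0 : 0 ≤ b := mul_nonneg hc.le (by linarith)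
    have hint1 : 0 ≤ c ^ 2 * ((t - 2 * r) * (3 * t - 2 * r)) :=
      mul_nonneg (sq_nonneg c) (mul_nonneg (by linarith) (by linarith))
    have hint2 : 8 * t < c ^ 2 * t * t := by
      have ht0 : 0 < t := by linarith
      have := mul_lt_mul_of_pos_right h8 ht0
      linarith
    have hb2 : 2 * t ≤ b ^ 2 := by
      rw [hbdef]
      exact quad_growth c r t hr h2rt hint1 hint2
    have ht1 : 1 ≤ t := hR1.trans hζ.le
    have hb1 : 1 ≤ b := one_le_of_sq b t hb0 ht1 hb2
    have hbd : b ^ 2 ≤ b ^ d := pow_le_pow_right₀ hb1 hd2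
    calc 2 * t ≤ b ^ 2 := hb2
      _ ≤ b ^ d := hbd
      _ = c ^ d * (t - r) ^ d := by rw [hbdef, mul_pow]
      _ ≤ ‖(p n).leadingCoeff‖ * (t - r) ^ d :=
          mul_le_mul_of_nonneg_right hlead (pow_nonneg (by linarith) d)
      _ ≤ ‖(p n).eval ζ‖ := hlow
  -- iterates blow up once past R
  have blow : ∀ z : ℂ, ∀ n, N ≤ n → R < ‖compEval p n z‖ →
      ∀ k : ℕ, 2 ^ k * R < ‖compEval p (n + k) z‖ := by
    intro z n hn hb k
    induction k with
    | zero => simpa using hb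
    | succ k ih =>
      have h2k : (1:ℝ) ≤ 2 ^ k := one_le_pow₀ (by norm_num)
      have h1 : R < ‖compEval p (n + k) z‖ := by
        have := mul_le_mul_of_nonneg_right h2k hRpos.le
        linarith
      have h2 := escape (n + k + 1) (by omega) _ h1
      have heq : compEval p (n + (k + 1)) z = (p (n + k + 1)).eval (compEval p (n + k) z) := rfl
      rw [heq]
      have hpow : (2:ℝ) ^ (k + 1) * R = 2 * (2 ^ k * R) := by ring
      linarith
  -- the filled Julia set equals a closed region
  have hKT : {z : ℂ | ∃ M : ℝ, ∀ n ≥ 1, ‖compEval p n z‖ ≤ M} =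
      {z : ℂ | ∀ n, N ≤ n → ‖compEval p n z‖ ≤ R} := by
    ext z
    simp only [Set.mem_setOf_eq]
    constructor
    · rintro ⟨M, hM⟩ n hn
      by_contra hgt
      push_neg at hgt
      obtain ⟨k, hk⟩ : ∃ k : ℕ, M < 2 ^ k * R := by
        obtain ⟨k, hk⟩ := pow_unbounded_of_one_lt (M / R) (by norm_num : (1:ℝ) < 2)
        exact ⟨k, by rwa [div_lt_iff₀ hRpos] at hk⟩
      have h1 := blow z n hn hgt k
      have hM' := hM (n + k) (by omega)
      linarith
    · intro hz
      refine ⟨R + ∑ m ∈ Finset.range N, ‖compEval p m z‖, ?_⟩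
      intro n hn
      have hsum0 : 0 ≤ ∑ m ∈ Finset.range N, ‖compEval p m z‖ :=
        Finset.sum_nonneg fun m _ => norm_nonneg _
      rcases le_or_gt N n with hN | hN
      · linarith [hz n hN]
      · have hmem : n ∈ Finset.range N := Finset.mem_range.mpr hN
        have := Finset.single_le_sum (f := fun m => ‖compEval p m z‖)
          (fun m _ => norm_nonneg _) hmem
        linarith
  have hclosed : ∀ n : ℕ, IsClosed {z : ℂ | ‖compEval p n z‖ ≤ R} :=
    fun n => isClosed_le (continuous_norm.comp (compEval_continuous p n)) continuous_const
  have hbded : ∀ n, N ≤ n → Bornology.IsBounded {z : ℂ | ‖compEval p n z‖ ≤ R} := by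
    intro n hn
    obtain ⟨B, hB⟩ := bounded_preimage (compPoly p n)
      (compPoly_natDegree_pos p hdeg1 hdeg n (by omega)) R
    apply Bornology.IsBounded.subset (Metric.isBounded_closedBall (x := (0:ℂ)) (r := B))
    intro z hz
    simp only [Set.mem_setOf_eq] at hz
    rw [Metric.mem_closedBall, dist_zero_right]
    by_contra hgt
    push_neg at hgt
    have h1 := hB z hgt.le
    rw [compPoly_eval] at h1
    linarith
  have hTclosed : IsClosed {z : ℂ | ∀ n, N ≤ n → ‖compEval p n z‖ ≤ R} := by
    have heq : {z : ℂ | ∀ n, N ≤ n → ‖compEval p n z‖ ≤ R} =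
        ⋂ (n : ℕ) (_ : N ≤ n), {z : ℂ | ‖compEval p n z‖ ≤ R} := by
      ext z; simp
    rw [heq]
    exact isClosed_iInter fun n => isClosed_iInter fun _ => hclosed n
  have hTcompact : IsCompact {z : ℂ | ∀ n, N ≤ n → ‖compEval p n z‖ ≤ R} := by
    apply Metric.isCompact_of_isClosed_isBounded hTclosed
    exact (hbded N le_rfl).subset fun z hz => hz N le_rfl
  -- nonemptiness via nested compact sets
  have hAsub : ∀ k : ℕ, {z : ℂ | ‖compEval p (N + (k + 1)) z‖ ≤ R} ⊆
      {z : ℂ | ‖compEval p (N + k) z‖ ≤ R} := by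
    intro k z hz
    simp only [Set.mem_setOf_eq] at hz ⊢
    by_contra hgt
    push_neg at hgt
    have h2 := escape (N + k + 1) (by omega) _ hgt
    have heq : compEval p (N + (k + 1)) z = (p (N + k + 1)).eval (compEval p (N + k) z) := rfl
    rw [heq] at hz
    linarith
  have hAne : ∀ k : ℕ, ({z : ℂ | ‖compEval p (N + k) z‖ ≤ R}).Nonempty := by
    intro k
    have hpos := compPoly_natDegree_pos p hdeg1 hdeg (N + k) (by omega)
    obtain ⟨z, hz⟩ := Complex.exists_root (Polynomial.natDegree_pos_iff_degree_pos.mp hpos)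
    refine ⟨z, ?_⟩
    simp only [Set.mem_setOf_eq]
    rw [← compPoly_eval, hz]
    simpa using hRpos.le
  obtain ⟨z0, hz0⟩ := IsCompact.nonempty_iInter_of_sequence_nonempty_isCompact_isClosed
    (fun k => {z : ℂ | ‖compEval p (N + k) z‖ ≤ R}) hAsub hAne
    (Metric.isCompact_of_isClosed_isBounded (hclosed (N + 0)) (hbded (N + 0) (by omega)))
    (fun k => hclosed (N + k))
  rw [Set.mem_iInter] at hz0
  constructor
  · refine ⟨z0, ?_⟩
    rw [hKT]
    intro n hn
    have h1 := hz0 (n - N)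
    simp only [Set.mem_setOf_eq] at h1
    rwa [Nat.add_sub_cancel' hn] at h1
  · rw [hKT]
    exact hTcompact
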